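/- arXiv:1802.08485 — 2 statements merged into one kernel-verified Lean document; each statement's English description precedes it below -/
import Mathlib

section
/- (Ping-pong lemma) Let S be a set and f₁, f₂ two bijections of S. Assume there exist subsets S₁, S₂ of S with S₁ ⊄ S₂ and S₂ ⊄ S₁, such that f₁ⁿ(S₁) ⊆ S₂ and f₂ⁿ(S₂) ⊆ S₁ for all nonzero integers n. Then f₁ and f₂ generate a free group of rank 2 inside the symmetric group of S. -/
open Monoid CoprodI Pointwise Cardinal

section Aux

variable {G : Type*} [Group G] {H : Bool → Type*} [∀ i, Group (H i)]
  (f : ∀ i, H i →* G) {α : Type*} [MulAction G α] (X : Bool → Set α)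
  (hpp : Pairwise fun i j => ∀ h : H i, h ≠ 1 → f i h • X j ⊆ X i)
  (hns : ∀ i, ¬ X (!i) ⊆ X i)

include hpp in
theorem aux_lift_word_ping_pong {i j k} (w : NeWord H i j) (hk : j ≠ k) :
    CoprodI.lift f w.prod • X k ⊆ X i := by
  induction' w with i x hne_one i j k l w₁ hne w₂ hIw₁ hIw₂ generalizing k
  · simpa using hpp hk _ hne_one
  · calc
      CoprodI.lift f (NeWord.append w₁ hne w₂).prod • X k
          = CoprodI.lift f w₁.prod • CoprodI.lift f w₂.prod • X k := by
        simp [mul_smul]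
      _ ⊆ CoprodI.lift f w₁.prod • X _ := Set.smul_set_subset_smul_set_iff.mpr (hIw₂ hk)
      _ ⊆ X i := hIw₁ hne

include hpp hns in
theorem aux_head_eq_last {i} (w : NeWord H i i) : CoprodI.lift f w.prod ≠ 1 := by
  intro heq1
  have hne : i ≠ !i := by cases i <;> simp
  have : X (!i) ⊆ X i := by
    simpa [heq1] using aux_lift_word_ping_pong f X hpp w hne
  exact hns i this

include hpp hns in
theorem aux_head_card {i j} (w : NeWord H i j)
    (hcard : 3 ≤ #(H i)) (hheadtail : i ≠ j) : CoprodI.lift f w.prod ≠ 1 := by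
  obtain ⟨h, hn1, hnh⟩ := Cardinal.three_le hcard 1 w.head⁻¹
  have hnot1 : h * w.head ≠ 1 := by
    rw [← div_inv_eq_mul]
    exact div_ne_one_of_ne hnh
  let w' : NeWord H i i :=
    NeWord.append (NeWord.mulHead w h hnot1) hheadtail.symm
      (NeWord.singleton h⁻¹ (inv_ne_one.mpr hn1))
  have hw' := aux_head_eq_last f X hpp hns w'
  intro heq1
  apply hw'
  simp [w', heq1]

include hpp hns in
theorem aux_nontrivial (hcard : ∀ i, 3 ≤ #(H i)) {i j} (w : NeWord H i j) :
    CoprodI.lift f w.prod ≠ 1 := by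
  by_cases hij : i = j
  · subst hij; exact aux_head_eq_last f X hpp hns w
  · exact aux_head_card f X hpp hns w (hcard i) hij

include hpp hns in
theorem aux_injective (hcard : ∀ i, 3 ≤ #(H i)) :
    Function.Injective (CoprodI.lift f) := by
  classical
  apply (injective_iff_map_eq_one (CoprodI.lift f)).mpr
  rw [(CoprodI.Word.equiv).forall_congr_left]
  intro w Heq
  dsimp [Word.equiv] at *
  by_cases hne : w = Word.empty
  · rw [hne, Word.prod_empty]
  · obtain ⟨i, j, w, rfl⟩ := NeWord.of_word w hne
    exact absurd Heq (aux_nontrivial f X hpp hns hcard w)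

end Aux

theorem stmt_4 (S : Type*) (f₁ f₂ : Equiv.Perm S) (S₁ S₂ : Set S)
    (h₁₂ : ¬ S₁ ⊆ S₂) (h₂₁ : ¬ S₂ ⊆ S₁)
    (hf₁ : ∀ n : ℤ, n ≠ 0 → (⇑(f₁ ^ n)) '' S₁ ⊆ S₂)
    (hf₂ : ∀ n : ℤ, n ≠ 0 → (⇑(f₂ ^ n)) '' S₂ ⊆ S₁) :
    Function.Injective
      (FreeGroup.lift (fun b : Bool => if b then f₁ else f₂) :
        FreeGroup Bool →* Equiv.Perm S) := by
  set a : Bool → Equiv.Perm S := fun b => if b then f₁ else f₂ with ha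
  have : FreeGroup.lift a =
      (CoprodI.lift fun i : Bool => FreeGroup.lift fun _ : Unit => a i).comp
        (@freeGroupEquivCoprodI Bool).toMonoidHom := by
    ext i
    simp
  rw [this, MonoidHom.coe_comp]
  refine Function.Injective.comp ?_ (MulEquiv.injective _)
  set X : Bool → Set S := fun b => if b then S₂ else S₁ with hX
  apply aux_injective (fun i => FreeGroup.lift fun _ : Unit => a i) X
  · rintro i j hij
    refine FreeGroup.freeGroupUnitEquivInt.forall_congr_left.mpr ?_
    intro n hne1
    change FreeGroup.lift (fun _ => a i) (FreeGroup.of () ^ n) • X j ⊆ X i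
    simp only [map_zpow, FreeGroup.lift_apply_of]
    have hnne0 : n ≠ 0 := by
      rintro rfl
      apply hne1
      simp [FreeGroup.freeGroupUnitEquivInt]
    have hXj : X j = X (!i) := by
      cases i <;> cases j <;> simp_all
    rw [hXj]
    have hsmul : ∀ (g : Equiv.Perm S) (T : Set S), g • T = ⇑g '' T := fun g T => rfl
    cases i
    · simpa [X, a, hsmul] using hf₂ n hnne0
    · simpa [X, a, hsmul] using hf₁ n hnne0
  · intro i
    cases i
    · simpa [X] using h₂₁
    · simpa [X] using h₁₂
  · intro i
    rw [FreeGroup.freeGroupUnitEquivInt.cardinal_eq, Cardinal.mk_denumerable]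
    exact (Cardinal.nat_lt_aleph0 3).le
end

section
/- (Malcev) Let G be a group and n a positive integer such that every finitely generated subgroup of G embeds into GL_n(K) for some field K (possibly depending on the subgroup). Then there exists a field K' such that G embeds into GL_n(K'). -/
open Matrix Filter

universe u

theorem stmt_9 (G : Type u) [Group G] (n : ℕ)
    (h : ∀ H : Subgroup G, H.FG → ∃ (K : Type u) (fK : Field K),
      letI := fK; ∃ φ : H →* GL (Fin n) K, Function.Injective φ) :
    ∃ (K' : Type u) (fK' : Field K'),
      letI := fK'; ∃ φ : G →* GL (Fin n) K', Function.Injective φ := by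
  classical
  -- index by finite subsets of G
  let H : Finset G → Subgroup G := fun i => Subgroup.closure (i : Set G)
  have hHfg : ∀ i, (H i).FG := fun i => ⟨i, rfl⟩
  choose K fK φ hφ using fun i => h (H i) (hHfg i)
  letI : ∀ i, Field (K i) := fK
  -- an ultrafilter refining atTop on Finset G
  let U : Ultrafilter (Finset G) := Ultrafilter.of atTop
  have hU : (U : Filter (Finset G)) ≤ atTop := Ultrafilter.of_le _
  have hmem : ∀ g : G, ∀ᶠ i in (U : Filter (Finset G)), g ∈ H i := by
    intro g
    apply hU
    filter_upwards [Filter.eventually_ge_atTop ({g} : Finset G)] with i hi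
    exact Subgroup.subset_closure (hi (Finset.mem_singleton_self g))
  -- the maximal ideal of functions vanishing U-a.e.
  let m : Ideal (∀ i, K i) :=
    { carrier := {f | ∀ᶠ i in (U : Filter (Finset G)), f i = 0}
      add_mem' := fun ha hb => (ha.and hb).mono fun i ⟨h1, h2⟩ => by
        simp [Pi.add_apply, h1, h2]
      zero_mem' := Filter.Eventually.of_forall fun i => rfl
      smul_mem' := fun c f hf => hf.mono fun i hi => by
        simp [Pi.smul_apply, hi] }
  have hmem_m : ∀ f : ∀ i, K i, f ∈ m ↔ ∀ᶠ i in (U : Filter (Finset G)), f i = 0 :=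
    fun f => Iff.rfl
  have hmax : m.IsMaximal := by
    rw [Ideal.isMaximal_iff]
    constructor
    · intro h1
      obtain ⟨i, hi⟩ := ((hmem_m 1).mp h1).exists
      exact one_ne_zero hi
    · intro J f hmJ hfm hfJ
      have hne : ∀ᶠ i in (U : Filter (Finset G)), f i ≠ 0 :=
        Ultrafilter.eventually_not.mpr hfm
      let ginv : ∀ i, K i := fun i => (f i)⁻¹
      have hkey : (1 : ∀ i, K i) - ginv * f ∈ m := by
        rw [hmem_m]
        refine hne.mono fun i hi => ?_
        simp [ginv, inv_mul_cancel₀ hi]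
      have : (1 : ∀ i, K i) = ((1 : ∀ i, K i) - ginv * f) + ginv * f := by ring
      rw [this]
      exact J.add_mem (hmJ hkey) (J.mul_mem_left _ hfJ)
  -- the ultraproduct field
  let K' := (∀ i, K i) ⧸ m
  letI : Field K' := Ideal.Quotient.field m
  let π : (∀ i, K i) →+* K' := Ideal.Quotient.mk m
  have hπ_eq : ∀ f g : ∀ i, K i,
      π f = π g ↔ ∀ᶠ i in (U : Filter (Finset G)), f i = g i := by
    intro f g
    rw [Ideal.Quotient.mk_eq_mk_iff_sub_mem, hmem_m]
    constructor <;> exact fun hh => hh.mono fun i hi => by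
      simpa [sub_eq_zero] using hi
  -- the pointwise matrices
  let A : G → ∀ i, Matrix (Fin n) (Fin n) (K i) := fun g i =>
    if hg : g ∈ H i then ((φ i ⟨g, hg⟩ : GL (Fin n) (K i)) : Matrix (Fin n) (Fin n) (K i))
    else 1
  let B : G → Matrix (Fin n) (Fin n) K' := fun g a b => π (fun i => A g i a b)
  have hA1 : ∀ i, A 1 i = 1 := by
    intro i
    simp only [A]
    rw [dif_pos (one_mem (H i))]
    have : (⟨1, one_mem (H i)⟩ : H i) = 1 := rfl
    rw [this, _root_.map_one, Units.val_one]
  have hB1 : B 1 = 1 := by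
    ext a b
    simp only [B]
    have : (fun i => A 1 i a b) = fun i => (1 : Matrix (Fin n) (Fin n) (K i)) a b := by
      funext i; rw [hA1]
    rw [this]
    by_cases hab : a = b
    · subst hab
      simp only [Matrix.one_apply_eq]
      exact _root_.map_one π
    · simp only [Matrix.one_apply_ne hab]
      exact map_zero π
  have hAmul : ∀ g g' : G, ∀ᶠ i in (U : Filter (Finset G)),
      A (g * g') i = A g i * A g' i := by
    intro g g'
    filter_upwards [hmem g, hmem g'] with i hg hg'
    simp only [A]
    rw [dif_pos (mul_mem hg hg'), dif_pos hg, dif_pos hg']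
    have : (⟨g * g', mul_mem hg hg'⟩ : H i) = ⟨g, hg⟩ * ⟨g', hg'⟩ := rfl
    rw [this, _root_.map_mul, Units.val_mul]
  have hBmul : ∀ g g' : G, B (g * g') = B g * B g' := by
    intro g g'
    ext a b
    have step : (B g * B g') a b = π (fun i => (A g i * A g' i) a b) := by
      rw [Matrix.mul_apply]
      simp only [B]
      simp_rw [← _root_.map_mul]
      rw [← map_sum]
      congr 1
      funext i
      rw [Matrix.mul_apply]
      simp [Finset.sum_apply]
    rw [step]
    simp only [B]
    rw [hπ_eq]
    filter_upwards [hAmul g g'] with i hi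
    rw [hi]
  have hval : ∀ g : G, B g * B g⁻¹ = 1 := by
    intro g
    rw [← hBmul, mul_inv_cancel, hB1]
  have hval' : ∀ g : G, B g⁻¹ * B g = 1 := by
    intro g
    rw [← hBmul, inv_mul_cancel, hB1]
  let Φ : G →* GL (Fin n) K' :=
    { toFun := fun g => ⟨B g, B g⁻¹, hval g, hval' g⟩
      map_one' := by
        refine Units.ext ?_
        exact hB1
      map_mul' := fun g g' => Units.ext (hBmul g g') }
  refine ⟨K', inferInstance, Φ, ?_⟩
  rw [injective_iff_map_eq_one]
  intro g hg
  have hBg : B g = 1 := congrArg Units.val hg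
  have hent : ∀ a b : Fin n, ∀ᶠ i in (U : Filter (Finset G)),
      A g i a b = (1 : Matrix (Fin n) (Fin n) (K i)) a b := by
    intro a b
    have h1 : π (fun i => A g i a b) = (1 : Matrix (Fin n) (Fin n) K') a b := by
      have := congrFun (congrFun hBg a) b
      exact this
    have h2 : (1 : Matrix (Fin n) (Fin n) K') a b
        = π (fun i => (1 : Matrix (Fin n) (Fin n) (K i)) a b) := by
      by_cases hab : a = b
      · subst hab
        simp only [Matrix.one_apply_eq]
        exact (_root_.map_one π).symm
      · simp only [Matrix.one_apply_ne hab]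
        exact (map_zero π).symm
    rw [h2] at h1
    exact (hπ_eq _ _).mp h1
  have hall : ∀ᶠ i in (U : Filter (Finset G)),
      ∀ a b : Fin n, A g i a b = (1 : Matrix (Fin n) (Fin n) (K i)) a b := by
    rw [eventually_all]
    intro a
    rw [eventually_all]
    exact hent a
  obtain ⟨i, hi1, hi2⟩ := (hall.and (hmem g)).exists
  have hAi : A g i = 1 := by
    ext a b; exact hi1 a b
  simp only [A] at hAi
  rw [dif_pos hi2] at hAi
  have : φ i ⟨g, hi2⟩ = 1 := Units.ext hAi
  have h1 : (⟨g, hi2⟩ : H i) = 1 := hφ i (by rw [this, _root_.map_one])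
  exact congrArg Subtype.val h1
end
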